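/- Derivative identities for the Marchenko–Pastur Stieltjes transforms. Fix y > 0. For all z in the complex upper half-plane, the following identities hold: (m_1(z)/2) · ( z m_1(z) (2 m_2′(z) + m_2(z)/z) + m_1(z) − 1/z ) = m_1′(z), and (m_2(z)/2) · ( z y m_2(z) (2 m_1′(z) + m_1(z)/z) + m_2(z) − 1/z ) = m_2′(z). -/

import Mathlib

/-!
Statement 19: Derivative identities for the Marchenko–Pastur Stieltjes transforms
(identities (5.x) and their analogue in Bao–Ding–Wang).
-/

noncomputable section

/-- `λ₊ = (1 + √y)²`. -/
def lamP (y : ℝ) : ℝ := (1 + Real.sqrt y) ^ 2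

/-- `λ₋ = (1 − √y)²`. -/
def lamM (y : ℝ) : ℝ := (1 - Real.sqrt y) ^ 2

/-- The Marchenko–Pastur Stieltjes transform `m₁` on the upper half-plane, where the square
root is the principal complex square root (branch cut on the negative real axis). -/
def m1C (y : ℝ) (z : ℂ) : ℂ :=
  (1 - (y : ℂ) - z + Complex.I * (((lamP y : ℂ) - z) * (z - (lamM y : ℂ))) ^ ((1 : ℂ) / 2))
    / (2 * z * (y : ℂ))

/-- The Marchenko–Pastur Stieltjes transform `m₂` on the upper half-plane. -/
def m2C (y : ℝ) (z : ℂ) : ℂ :=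
  ((y : ℂ) - 1 - z + Complex.I * (((lamP y : ℂ) - z) * (z - (lamM y : ℂ))) ^ ((1 : ℂ) / 2))
    / (2 * z)

lemma lam_sum {y : ℝ} (hy : 0 ≤ y) : lamP y + lamM y = 2 + 2 * y := by
  have := Real.sq_sqrt hy
  simp only [lamP, lamM]; nlinarith [this]

lemma lam_prod {y : ℝ} (hy : 0 ≤ y) : lamP y * lamM y = (1 - y) ^ 2 := by
  have := Real.sq_sqrt hy
  simp only [lamP, lamM]; nlinarith [this]

lemma gz_slit {y : ℝ} (hy : 0 < y) {z : ℂ} (hz : 0 < z.im) :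
    ((lamP y : ℂ) - z) * (z - (lamM y : ℂ)) ∈ Complex.slitPlane := by
  rw [Complex.mem_slitPlane_iff]
  by_cases him : (((lamP y : ℂ) - z) * (z - (lamM y : ℂ))).im = 0
  · left
    have him' : z.im * (lamP y + lamM y - 2 * z.re) = 0 := by
      simp only [Complex.mul_im, Complex.sub_re, Complex.sub_im, Complex.ofReal_re, Complex.ofReal_im] at him
      linear_combination him
    have hre : 2 * z.re = lamP y + lamM y := by
      rcases mul_eq_zero.mp him' with h | h
      · exact absurd h (ne_of_gt hz)
      · linarith
    have hs := lam_sum hy.le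
    have hp := lam_prod hy.le
    have : (((lamP y : ℂ) - z) * (z - (lamM y : ℂ))).re
        = (lamP y - z.re) * (z.re - lamM y) + z.im ^ 2 := by
      simp [Complex.mul_re, Complex.sub_re, Complex.sub_im, Complex.ofReal_re, Complex.ofReal_im]; ring
    rw [this]
    nlinarith [sq_nonneg z.im, hz]
  · right; exact him

lemma z_ne {z : ℂ} (hz : 0 < z.im) : z ≠ 0 := by
  intro h; simp [h] at hz

lemma sq_s {y : ℝ} (hy : 0 < y) {z : ℂ} (hz : 0 < z.im) :
    ((((lamP y : ℂ) - z) * (z - (lamM y : ℂ))) ^ ((1 : ℂ) / 2)) *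
      ((((lamP y : ℂ) - z) * (z - (lamM y : ℂ))) ^ ((1 : ℂ) / 2))
    = ((lamP y : ℂ) - z) * (z - (lamM y : ℂ)) := by
  have hne := Complex.slitPlane_ne_zero (gz_slit hy hz)
  rw [← Complex.cpow_add _ _ hne]
  norm_num

lemma eqA {y : ℝ} (hy : 0 < y) {z : ℂ} (hz : 0 < z.im) :
    z * m1C y z * (1 + m2C y z) = -1 := by
  have hs := sq_s hy hz
  have hzne := z_ne hz
  have hyne : (y : ℂ) ≠ 0 := by exact_mod_cast hy.ne'
  have hsum : (lamP y : ℂ) + (lamM y : ℂ) = 2 + 2 * (y : ℂ) := by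
    exact_mod_cast congrArg (Complex.ofReal) (lam_sum hy.le)
  have hprod : (lamP y : ℂ) * (lamM y : ℂ) = (1 - (y : ℂ)) ^ 2 := by
    exact_mod_cast congrArg (Complex.ofReal) (lam_prod hy.le)
  set S : ℂ := (((lamP y : ℂ) - z) * (z - (lamM y : ℂ))) ^ ((1 : ℂ) / 2) with hS
  have key : (1 - (y:ℂ) - z + Complex.I * S) * ((y:ℂ) - 1 + z + Complex.I * S)
      = -(4 * z * y) := by
    linear_combination (Complex.I ^ 2) * hs
      + (((lamP y:ℂ) - z) * (z - (lamM y:ℂ))) * Complex.I_sq - z * hsum + hprod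
  simp only [m1C, m2C, ← hS]
  field_simp
  linear_combination key

lemma eqB {y : ℝ} (hy : 0 < y) {z : ℂ} (hz : 0 < z.im) :
    z * m2C y z * (1 + (y : ℂ) * m1C y z) = -1 := by
  have hs := sq_s hy hz
  have hzne := z_ne hz
  have hyne : (y : ℂ) ≠ 0 := by exact_mod_cast hy.ne'
  have hsum : (lamP y : ℂ) + (lamM y : ℂ) = 2 + 2 * (y : ℂ) := by
    exact_mod_cast congrArg (Complex.ofReal) (lam_sum hy.le)
  have hprod : (lamP y : ℂ) * (lamM y : ℂ) = (1 - (y : ℂ)) ^ 2 := by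
    exact_mod_cast congrArg (Complex.ofReal) (lam_prod hy.le)
  set S : ℂ := (((lamP y : ℂ) - z) * (z - (lamM y : ℂ))) ^ ((1 : ℂ) / 2) with hS
  have key : ((y:ℂ) - 1 - z + Complex.I * S) * (1 - (y:ℂ) + z + Complex.I * S)
      = -(4 * z) := by
    linear_combination (Complex.I ^ 2) * hs
      + (((lamP y:ℂ) - z) * (z - (lamM y:ℂ))) * Complex.I_sq - z * hsum + hprod
  simp only [m1C, m2C, ← hS]
  field_simp
  linear_combination key

lemma diff_m1 {y : ℝ} (hy : 0 < y) {z : ℂ} (hz : 0 < z.im) :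
    DifferentiableAt ℂ (m1C y) z := by
  have hS : DifferentiableAt ℂ
      (fun w : ℂ => (((lamP y : ℂ) - w) * (w - (lamM y : ℂ))) ^ ((1 : ℂ) / 2)) z :=
    DifferentiableAt.cpow (by fun_prop) (differentiableAt_const _) (gz_slit hy hz)
  have hden : (2 : ℂ) * z * (y : ℂ) ≠ 0 := by
    have hyne : (y : ℂ) ≠ 0 := by exact_mod_cast hy.ne'
    simp [z_ne hz, hyne]
  exact DifferentiableAt.div (by fun_prop) (by fun_prop) hden

lemma diff_m2 {y : ℝ} (hy : 0 < y) {z : ℂ} (hz : 0 < z.im) :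
    DifferentiableAt ℂ (m2C y) z := by
  have hS : DifferentiableAt ℂ
      (fun w : ℂ => (((lamP y : ℂ) - w) * (w - (lamM y : ℂ))) ^ ((1 : ℂ) / 2)) z :=
    DifferentiableAt.cpow (by fun_prop) (differentiableAt_const _) (gz_slit hy hz)
  have hden : (2 : ℂ) * z ≠ 0 := by simp [z_ne hz]
  exact DifferentiableAt.div (by fun_prop) (by fun_prop) hden

/-- **Derivative identities for the Marchenko–Pastur Stieltjes transforms**:
`(m₁/2)(z m₁ (2m₂′ + m₂/z) + m₁ − 1/z) = m₁′` and
`(m₂/2)(z y m₂ (2m₁′ + m₁/z) + m₂ − 1/z) = m₂′`. -/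
theorem mp_stieltjes_derivative_identities (y : ℝ) (hy : 0 < y) (z : ℂ) (hz : 0 < z.im) :
    m1C y z / 2 * (z * m1C y z * (2 * deriv (m2C y) z + m2C y z / z) + m1C y z - 1 / z)
        = deriv (m1C y) z ∧
    m2C y z / 2 * (z * (y : ℂ) * m2C y z * (2 * deriv (m1C y) z + m1C y z / z)
          + m2C y z - 1 / z)
        = deriv (m2C y) z := by
  have hzne := z_ne hz
  have hyne : (y : ℂ) ≠ 0 := by exact_mod_cast hy.ne'
  have h1 := (diff_m1 hy hz).hasDerivAt
  have h2 := (diff_m2 hy hz).hasDerivAt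
  set a := m1C y z with ha'
  set b := m2C y z with hb'
  set d1 := deriv (m1C y) z with hd1'
  set d2 := deriv (m2C y) z with hd2'
  have hmem : {w : ℂ | 0 < w.im} ∈ nhds z :=
    (isOpen_lt continuous_const Complex.continuous_im).mem_nhds hz
  have hA := eqA hy hz
  have hB := eqB hy hz
  have GA : HasDerivAt (fun w => w * m1C y w * (1 + m2C y w))
      ((1 * a + z * d1) * (1 + b) + z * a * (0 + d2)) z :=
    ((hasDerivAt_id z).mul h1).mul ((hasDerivAt_const z (1:ℂ)).add h2)
  have GA0 : HasDerivAt (fun w => w * m1C y w * (1 + m2C y w)) 0 z := by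
    have heq : (fun w : ℂ => w * m1C y w * (1 + m2C y w)) =ᶠ[nhds z] fun _ => -1 := by
      filter_upwards [hmem] with w hw; exact eqA hy hw
    exact (hasDerivAt_const z (-1:ℂ)).congr_of_eventuallyEq heq
  have hDA : (1 * a + z * d1) * (1 + b) + z * a * (0 + d2) = 0 := GA.unique GA0
  have GB : HasDerivAt (fun w => w * m2C y w * (1 + (y:ℂ) * m1C y w))
      ((1 * b + z * d2) * (1 + (y:ℂ) * a) + z * b * (0 + (y:ℂ) * d1)) z :=
    ((hasDerivAt_id z).mul h2).mul ((hasDerivAt_const z (1:ℂ)).add (h1.const_mul (y:ℂ)))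
  have GB0 : HasDerivAt (fun w => w * m2C y w * (1 + (y:ℂ) * m1C y w)) 0 z := by
    have heq : (fun w : ℂ => w * m2C y w * (1 + (y:ℂ) * m1C y w)) =ᶠ[nhds z] fun _ => -1 := by
      filter_upwards [hmem] with w hw; exact eqB hy hw
    exact (hasDerivAt_const z (-1:ℂ)).congr_of_eventuallyEq heq
  have hDB : (1 * b + z * d2) * (1 + (y:ℂ) * a) + z * b * (0 + (y:ℂ) * d1) = 0 := GB.unique GB0
  have hstep1 : -(a + z * d1) + z ^ 2 * a ^ 2 * d2 = 0 := by
    linear_combination z * a * hDA - (a + z * d1) * hA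
  have hstep2 : -(b + z * d2) + z ^ 2 * (y:ℂ) * b ^ 2 * d1 = 0 := by
    linear_combination z * b * hDB - (b + z * d2) * hB
  constructor
  · field_simp
    linear_combination a * hA + 2 * hstep1
  · field_simp
    linear_combination b * hB + 2 * hstep2

end
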